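/- Suppose the lifetime queue dynamics, boundary conditions, and availability constraint hold, and additionally Q_i^{(l)}(0) = 0 for all i ∈ V and l ∈ {1,…,L}. Then for every node i ∈ V \ {d}, every lifetime l ∈ {1,…,L}, and every horizon T ≥ 1, the telescoped availability bound holds: Q_i^{(≥l+1)}(T) ≤ Σ_{t=0}^{T−1} [ x_{→i}^{(≥l+1)}(t) + a_i^{(≥l)}(t) ] − Σ_{t=0}^{T−1} [ x_{i→}^{(l)}(t+1) + x_{i→}^{(≥l+1)}(t) ]. -/

import Mathlib

open Finset

/-- **Telescoped availability bound.**
Under the lifetime queue dynamics, boundary conditions, availability constraint, and zero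
initial queues, for every node `i ≠ d`, lifetime `l ∈ {1,…,L}` and horizon `T ≥ 1`:
`Q_i^{(≥l+1)}(T) ≤ Σ_{t<T} [x_{→i}^{(≥l+1)}(t) + a_i^{(≥l)}(t)]
                − Σ_{t<T} [x_{i→}^{(l)}(t+1) + x_{i→}^{(≥l+1)}(t)]`. -/
theorem telescoped_availability_bound
    {V : Type*} [Fintype V] [DecidableEq V]
    (E : Finset (V × V)) (d : V) (L : ℕ) (hL : 1 ≤ L)
    (Q : V → ℕ → ℕ → ℝ) (x : V → V → ℕ → ℕ → ℝ) (a : V → ℕ → ℕ → ℝ)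
    (hQnn : ∀ i l t, 0 ≤ Q i l t)
    (hxnn : ∀ i j l t, 0 ≤ x i j l t)
    (hann : ∀ i l t, 0 ≤ a i l t)
    (hQconv : ∀ i l t, l ∉ Finset.Icc 1 L → Q i l t = 0)
    (hxconv : ∀ i j l t, l ∉ Finset.Icc 1 L → x i j l t = 0)
    (hdyn : ∀ i, i ≠ d → ∀ l ∈ Finset.Icc 1 L, ∀ t : ℕ,
      Q i l (t + 1)
        = Q i (l + 1) t
          - (∑ j ∈ univ.filter (fun j => (i, j) ∈ E), x i j (l + 1) t)
          + (∑ j ∈ univ.filter (fun j => (j, i) ∈ E), x j i (l + 1) t)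
          + a i l t)
    (hbnd : ∀ l t, Q d l t = 0)
    (havail : ∀ i, ∀ l ∈ Finset.Icc 1 L, ∀ t : ℕ,
      (∑ j ∈ univ.filter (fun j => (i, j) ∈ E), x i j l t) ≤ Q i l t)
    (hQzero : ∀ i, ∀ l ∈ Finset.Icc 1 L, Q i l 0 = 0) :
    ∀ i, i ≠ d → ∀ l ∈ Finset.Icc 1 L, ∀ T : ℕ, 1 ≤ T →
      (∑ ℓ ∈ Finset.Icc (l + 1) L, Q i ℓ T)
        ≤ (∑ t ∈ Finset.range T,
            ((∑ ℓ ∈ Finset.Icc (l + 1) L,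
                ∑ j ∈ univ.filter (fun j => (j, i) ∈ E), x j i ℓ t)
              + (∑ ℓ ∈ Finset.Icc l L, a i ℓ t)))
          - (∑ t ∈ Finset.range T,
              ((∑ j ∈ univ.filter (fun j => (i, j) ∈ E), x i j l (t + 1))
                + (∑ ℓ ∈ Finset.Icc (l + 1) L,
                    ∑ j ∈ univ.filter (fun j => (i, j) ∈ E), x i j ℓ t))) := by
  intro i hi l hl T hT
  rw [Finset.mem_Icc] at hl
  obtain ⟨hl1, hlL⟩ := hl
  -- abbreviations
  set out : ℕ → ℕ → ℝ := fun ℓ t => ∑ j ∈ univ.filter (fun j => (i, j) ∈ E), x i j ℓ t with hout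
  set inn : ℕ → ℕ → ℝ := fun ℓ t => ∑ j ∈ univ.filter (fun j => (j, i) ∈ E), x j i ℓ t with hinn
  -- shift lemma
  have hshift : ∀ f : ℕ → ℝ, ∑ ℓ ∈ Finset.Icc l L, f (ℓ + 1)
      = (∑ ℓ ∈ Finset.Icc (l + 1) L, f ℓ) + f (L + 1) := by
    intro f
    have h1 : ∑ ℓ ∈ Finset.Icc l L, f (ℓ + 1) = ∑ ℓ ∈ Finset.Icc (l + 1) (L + 1), f ℓ := by
      apply Finset.sum_nbij' (fun ℓ => ℓ + 1) (fun ℓ => ℓ - 1) <;>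
        simp +contextual [Finset.mem_Icc] <;> omega
    rw [h1, Finset.sum_Icc_succ_top (by omega)]
  -- step inequality
  have hstep : ∀ t : ℕ, (∑ ℓ ∈ Finset.Icc (l + 1) L, Q i ℓ (t + 1))
      ≤ (∑ ℓ ∈ Finset.Icc (l + 1) L, Q i ℓ t)
        + ((∑ ℓ ∈ Finset.Icc (l + 1) L, inn ℓ t) + (∑ ℓ ∈ Finset.Icc l L, a i ℓ t))
        - (out l (t + 1) + ∑ ℓ ∈ Finset.Icc (l + 1) L, out ℓ t) := by
    intro t
    have hdyn' : ∑ ℓ ∈ Finset.Icc l L, Q i ℓ (t + 1)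
        = ∑ ℓ ∈ Finset.Icc l L, (Q i (ℓ + 1) t - out (ℓ + 1) t + inn (ℓ + 1) t + a i ℓ t) := by
      refine Finset.sum_congr rfl fun ℓ hℓ => ?_
      rw [Finset.mem_Icc] at hℓ
      exact hdyn i hi ℓ (Finset.mem_Icc.mpr ⟨by omega, hℓ.2⟩) t
    have hsplit : ∑ ℓ ∈ Finset.Icc l L, (Q i (ℓ + 1) t - out (ℓ + 1) t + inn (ℓ + 1) t + a i ℓ t)
        = (∑ ℓ ∈ Finset.Icc l L, Q i (ℓ + 1) t) - (∑ ℓ ∈ Finset.Icc l L, out (ℓ + 1) t)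
          + (∑ ℓ ∈ Finset.Icc l L, inn (ℓ + 1) t) + (∑ ℓ ∈ Finset.Icc l L, a i ℓ t) := by
      rw [Finset.sum_add_distrib, Finset.sum_add_distrib, Finset.sum_sub_distrib]
    have hQL : Q i (L + 1) t = 0 := hQconv i (L + 1) t (by simp [Finset.mem_Icc])
    have hxL : out (L + 1) t = 0 := by
      simp only [hout]
      exact Finset.sum_eq_zero fun j _ => hxconv i j (L + 1) t (by simp [Finset.mem_Icc])
    have hiL : inn (L + 1) t = 0 := by
      simp only [hinn]
      exact Finset.sum_eq_zero fun j _ => hxconv j i (L + 1) t (by simp [Finset.mem_Icc])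
    have hQs := hshift (fun ℓ => Q i ℓ t)
    have hos := hshift (fun ℓ => out ℓ t)
    have his := hshift (fun ℓ => inn ℓ t)
    -- total sum over Icc l L at time t+1
    have htot : ∑ ℓ ∈ Finset.Icc l L, Q i ℓ (t + 1)
        = (∑ ℓ ∈ Finset.Icc (l + 1) L, Q i ℓ t)
          - (∑ ℓ ∈ Finset.Icc (l + 1) L, out ℓ t)
          + (∑ ℓ ∈ Finset.Icc (l + 1) L, inn ℓ t)
          + (∑ ℓ ∈ Finset.Icc l L, a i ℓ t) := by
      rw [hdyn', hsplit, hQs, hos, his, hQL, hxL, hiL]; ring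
    have hins : ∑ ℓ ∈ Finset.Icc l L, Q i ℓ (t + 1)
        = Q i l (t + 1) + ∑ ℓ ∈ Finset.Icc (l + 1) L, Q i ℓ (t + 1) := by
      have hset : Finset.Icc l L = insert l (Finset.Icc (l + 1) L) := by
        ext m; simp only [Finset.mem_Icc, Finset.mem_insert]; omega
      rw [hset, Finset.sum_insert (by simp [Finset.mem_Icc])]
    have hav := havail i l (Finset.mem_Icc.mpr ⟨hl1, hlL⟩) (t + 1)
    have hav' : out l (t + 1) ≤ Q i l (t + 1) := hav
    linarith [hins ▸ htot]
  -- main induction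
  have main : ∀ T : ℕ, (∑ ℓ ∈ Finset.Icc (l + 1) L, Q i ℓ T)
      ≤ (∑ t ∈ Finset.range T,
            ((∑ ℓ ∈ Finset.Icc (l + 1) L, inn ℓ t) + (∑ ℓ ∈ Finset.Icc l L, a i ℓ t)))
        - (∑ t ∈ Finset.range T,
            (out l (t + 1) + ∑ ℓ ∈ Finset.Icc (l + 1) L, out ℓ t)) := by
    intro T
    induction T with
    | zero =>
      simp only [Finset.sum_range_zero, sub_zero]
      have : ∑ ℓ ∈ Finset.Icc (l + 1) L, Q i ℓ 0 = 0 :=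
        Finset.sum_eq_zero fun ℓ hℓ => by
          rw [Finset.mem_Icc] at hℓ
          exact hQzero i ℓ (Finset.mem_Icc.mpr ⟨by omega, hℓ.2⟩)
      rw [this]
    | succ T ih =>
      rw [Finset.sum_range_succ, Finset.sum_range_succ]
      linarith [hstep T]
  exact main T
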